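/- The complex vector space W_p with basis {d_n, e_n : n ∈ ℤ} and bilinear bracket defined on basis elements by [d_m, d_n] = (m-n)(4 d_{m+n+1} + d_{m+n+2}), [d_m, e_n] = (4m-4n+2) e_{m+n+1} + (m-n+1) e_{m+n+2}, [e_m, e_n] = (m-n) d_{m+n}, is a Lie algebra (i.e., the bracket is antisymmetric and satisfies the Jacobi identity). -/

import Mathlib

/-- The underlying space of the three-point Witt algebra W_p: the free ℂ-vector
space on the basis {d_n : n ∈ ℤ} ∪ {e_n : n ∈ ℤ}, with `Sum.inl n` ↦ d_n and
`Sum.inr n` ↦ e_n. -/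
abbrev Wp : Type := (ℤ ⊕ ℤ) →₀ ℂ

noncomputable def db (n : ℤ) : Wp := Finsupp.single (Sum.inl n) 1
noncomputable def eb (n : ℤ) : Wp := Finsupp.single (Sum.inr n) 1

/-- The bracket on basis elements:
[d_m, d_n] = (m-n)(4 d_{m+n+1} + d_{m+n+2}),
[d_m, e_n] = (4m-4n+2) e_{m+n+1} + (m-n+1) e_{m+n+2},
[e_m, e_n] = (m-n) d_{m+n}, and [e_m, d_n] = -[d_n, e_m]. -/
noncomputable def br0 : (ℤ ⊕ ℤ) → (ℤ ⊕ ℤ) → Wp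
  | .inl m, .inl n => ((m : ℂ) - n) • ((4 : ℂ) • db (m + n + 1) + db (m + n + 2))
  | .inl m, .inr n => (4 * (m : ℂ) - 4 * n + 2) • eb (m + n + 1) +
      ((m : ℂ) - n + 1) • eb (m + n + 2)
  | .inr m, .inl n => -((4 * (n : ℂ) - 4 * m + 2) • eb (n + m + 1) +
      ((n : ℂ) - m + 1) • eb (n + m + 2))
  | .inr m, .inr n => ((m : ℂ) - n) • db (m + n)

/-- The bilinear extension of `br0` to all of W_p. -/
noncomputable def wbr (x y : Wp) : Wp :=
  x.sum fun i a => y.sum fun j b => (a * b) • br0 i j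

lemma wbr_zero_left (y : Wp) : wbr 0 y = 0 := Finsupp.sum_zero_index

lemma wbr_zero_right (x : Wp) : wbr x 0 = 0 := by
  simp [wbr, Finsupp.sum_zero_index]

lemma wbr_add_left (x x' y : Wp) : wbr (x + x') y = wbr x y + wbr x' y := by
  unfold wbr
  rw [Finsupp.sum_add_index' (by intro i; simp) (by intro i a a'; rw [← Finsupp.sum_add]; exact Finsupp.sum_congr fun j _ => by rw [add_mul, add_smul])]

lemma wbr_add_right (x y y' : Wp) : wbr x (y + y') = wbr x y + wbr x y' := by
  unfold wbr
  rw [← Finsupp.sum_add]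
  refine Finsupp.sum_congr fun i _ => ?_
  rw [Finsupp.sum_add_index' (by intro j; simp) (by intro j b b'; rw [mul_add, add_smul])]

lemma wbr_smul_left (c : ℂ) (x y : Wp) : wbr (c • x) y = c • wbr x y := by
  unfold wbr
  rw [Finsupp.smul_sum, Finsupp.sum_smul_index' (by intro i; simp)]
  refine Finsupp.sum_congr fun i _ => ?_
  rw [Finsupp.smul_sum]
  refine Finsupp.sum_congr fun j _ => ?_
  rw [smul_smul]; congr 1; simp only [smul_eq_mul]; ring

lemma wbr_smul_right (c : ℂ) (x y : Wp) : wbr x (c • y) = c • wbr x y := by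
  unfold wbr
  rw [Finsupp.smul_sum]
  refine Finsupp.sum_congr fun i a => ?_
  rw [Finsupp.smul_sum, Finsupp.sum_smul_index' (by intro j; simp)]
  refine Finsupp.sum_congr fun j _ => ?_
  rw [smul_smul]; congr 1; simp only [smul_eq_mul]; ring

lemma wbr_neg_right (x y : Wp) : wbr x (-y) = -wbr x y := by
  rw [← neg_one_smul ℂ y, wbr_smul_right, neg_one_smul]

lemma wbr_single_single (i j : ℤ ⊕ ℤ) (a b : ℂ) :
    wbr (Finsupp.single i a) (Finsupp.single j b) = (a * b) • br0 i j := by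
  unfold wbr
  rw [Finsupp.sum_single_index (by simp), Finsupp.sum_single_index (by simp)]

lemma br0_skew (i j : ℤ ⊕ ℤ) : br0 i j = -br0 j i := by
  cases i with
  | inl m => cases j with
    | inl n => simp only [br0]; ring_nf; module
    | inr n => simp only [br0, neg_neg]
  | inr m => cases j with
    | inl n => simp only [br0, neg_neg]
    | inr n => simp only [br0]; ring_nf; module

lemma jac0 (i j k : ℤ ⊕ ℤ) :
    wbr (Finsupp.single i 1) (br0 j k) + wbr (Finsupp.single j 1) (br0 k i) +
      wbr (Finsupp.single k 1) (br0 i j) = 0 := by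
  rcases i with m | m <;> rcases j with n | n <;> rcases k with p | p <;>
    simp only [br0, db, eb, wbr_add_right, wbr_smul_right, wbr_neg_right,
      wbr_single_single, one_mul, mul_one] <;>
    push_cast <;> ring_nf <;> module

lemma wbr_skew (x y : Wp) : wbr x y = -wbr y x := by
  induction x using Finsupp.induction_linear with
  | zero => simp [wbr_zero_left, wbr_zero_right]
  | add f g hf hg => rw [wbr_add_left, wbr_add_right, hf, hg]; abel
  | single i a =>
    induction y using Finsupp.induction_linear with
    | zero => simp [wbr_zero_left, wbr_zero_right]
    | add f g hf hg => rw [wbr_add_left, wbr_add_right, hf, hg]; abel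
    | single j b =>
      rw [wbr_single_single, wbr_single_single, br0_skew, smul_neg, mul_comm]

lemma add3 {M : Type*} [AddCommGroup M] {A B C A' B' C' : M}
    (h1 : A + B + C = 0) (h2 : A' + B' + C' = 0) :
    A + A' + (B + B') + (C + C') = 0 := by
  rw [show A + A' + (B + B') + (C + C') = (A + B + C) + (A' + B' + C') by abel, h1, h2, add_zero]

lemma wbr_jacobi (x y z : Wp) :
    wbr x (wbr y z) + wbr y (wbr z x) + wbr z (wbr x y) = 0 := by
  induction x using Finsupp.induction_linear with
  | zero => simp [wbr_zero_left, wbr_zero_right]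
  | add f g hf hg =>
    simp only [wbr_add_left, wbr_add_right]
    exact add3 hf hg
  | single i a =>
    induction y using Finsupp.induction_linear with
    | zero => simp [wbr_zero_left, wbr_zero_right]
    | add f g hf hg =>
      simp only [wbr_add_left, wbr_add_right]
      exact add3 hf hg
    | single j b =>
      induction z using Finsupp.induction_linear with
      | zero => simp [wbr_zero_left, wbr_zero_right]
      | add f g hf hg =>
        simp only [wbr_add_left, wbr_add_right]
        exact add3 hf hg
      | single k c =>
        have hi : (Finsupp.single i a : Wp) = a • Finsupp.single i 1 := by simp
        have hj : (Finsupp.single j b : Wp) = b • Finsupp.single j 1 := by simp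
        have hk : (Finsupp.single k c : Wp) = c • Finsupp.single k 1 := by simp
        rw [hi, hj, hk]
        simp only [wbr_smul_left, wbr_smul_right, smul_smul]
        rw [show c * b * a = b * (c * a) by ring, show a * c * b = b * (c * a) by ring,
          show b * a * c = b * (c * a) by ring, ← smul_add, ← smul_add]
        rw [show wbr (Finsupp.single i 1) (wbr (Finsupp.single j 1) (Finsupp.single k 1)) = wbr (Finsupp.single i 1) (br0 j k) by rw [wbr_single_single]; simp,
          show wbr (Finsupp.single j 1) (wbr (Finsupp.single k 1) (Finsupp.single i 1)) = wbr (Finsupp.single j 1) (br0 k i) by rw [wbr_single_single]; simp,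
          show wbr (Finsupp.single k 1) (wbr (Finsupp.single i 1) (Finsupp.single j 1)) = wbr (Finsupp.single k 1) (br0 i j) by rw [wbr_single_single]; simp]
        rw [jac0, smul_zero]

/-- W_p is a Lie algebra: the bracket is antisymmetric and satisfies the
Jacobi identity. -/
theorem Wp_isLieAlgebra :
    (∀ x y : Wp, wbr x y = -wbr y x) ∧
    (∀ x y z : Wp, wbr x (wbr y z) + wbr y (wbr z x) + wbr z (wbr x y) = 0) := by
  exact ⟨wbr_skew, wbr_jacobi⟩
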